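/- arXiv:2101.05883 — 2 statements merged into one kernel-verified Lean document; each statement's English description precedes it below -/
import Mathlib

section
/- Let ι be an index type, w : ι → ℝ with w ξ ≥ 1 for all ξ, satisfying the two-sided Weyl law with exponent Q > 0 (finite level sets, c₁·λ^Q ≤ N(λ) ≤ c₂·λ^Q for λ ≥ 1). Then there exist constants c, C > 0 such that for every p ∈ (1, 2]: c ≤ (p − 1) · ∑'_ξ (w ξ)^{−Q·p} ≤ C. (Via the Hardy–Littlewood Tauberian formula Tr_ω(A) = lim_{p→1⁺} (p−1)Tr(A^p), this is the computation showing in the paper's Dixmier lemma that a nonzero positive L-elliptic multiplier of critical order −Q has finite, strictly positive Dixmier trace.) -/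
open Real
open scoped ENNReal

set_option maxHeartbeats 1000000 in
theorem dixmier_trace_critical_order_two_sided
    {ι : Type*} (w : ι → ℝ) (hw : ∀ ξ, 1 ≤ w ξ)
    (hfin : ∀ lam : ℝ, 1 ≤ lam → {ξ | w ξ ≤ lam}.Finite)
    (Q : ℝ) (hQ : 0 < Q) (c₁ c₂ : ℝ) (hc₁ : 0 < c₁) (hc₂ : 0 < c₂)
    (hN : ∀ lam : ℝ, ∀ _ : 1 ≤ lam,
      c₁ * lam ^ Q ≤ (Nat.card {ξ // w ξ ≤ lam} : ℝ) ∧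
      (Nat.card {ξ // w ξ ≤ lam} : ℝ) ≤ c₂ * lam ^ Q) :
    ∃ c C : ℝ, 0 < c ∧ 0 < C ∧ ∀ p : ℝ, 1 < p → p ≤ 2 →
      c ≤ (p - 1) * (∑' ξ, (w ξ) ^ (-Q * p)) ∧
      (p - 1) * (∑' ξ, (w ξ) ^ (-Q * p)) ≤ C := by
  classical
  set R : ℝ := max 2 ((2 * c₂ / c₁) ^ (1 / Q)) with hRdef
  have hR2 : (2:ℝ) ≤ R := le_max_left _ _
  have hR1 : (1:ℝ) < R := lt_of_lt_of_le one_lt_two hR2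
  have hR0 : (0:ℝ) < R := lt_trans one_pos hR1
  have hRne1 : R ≠ 1 := ne_of_gt hR1
  have hlogR : 0 < Real.log R := Real.log_pos hR1
  have hbase : (0:ℝ) < 2 * c₂ / c₁ := by positivity
  have hRQpos : (0:ℝ) < R ^ Q := Real.rpow_pos_of_pos hR0 _
  have hRQgt : 2 * c₂ ≤ c₁ * R ^ Q := by
    have h1 : (2 * c₂ / c₁) ^ (1 / Q) ≤ R := le_max_right _ _
    have h2 : ((2 * c₂ / c₁) ^ (1 / Q)) ^ Q ≤ R ^ Q :=
      Real.rpow_le_rpow (Real.rpow_nonneg hbase.le _) h1 hQ.le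
    rw [one_div, Real.rpow_inv_rpow hbase.le hQ.ne'] at h2
    rw [div_le_iff₀ hc₁] at h2
    linarith
  set a : ℝ := R ^ (-Q) with hadef
  have ha0 : (0:ℝ) < a := Real.rpow_pos_of_pos hR0 _
  have ha1 : a < 1 := Real.rpow_lt_one_of_one_lt_of_neg hR1 (by linarith)
  have hwpos : ∀ ξ, (0:ℝ) < w ξ := fun ξ => lt_of_lt_of_le one_pos (hw ξ)
  -- fiber index
  set e : ι → ℕ := fun ξ => (⌈Real.logb R (w ξ)⌉ - 1).toNat with hedef
  have hub : ∀ ξ, w ξ ≤ R ^ ((e ξ : ℝ) + 1) := by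
    intro ξ
    have h2 : (⌈Real.logb R (w ξ)⌉ - 1 : ℤ) ≤ ((e ξ : ℤ)) := Int.self_le_toNat _
    have h3 := Int.le_ceil (Real.logb R (w ξ))
    have h1 : Real.logb R (w ξ) ≤ (e ξ : ℝ) + 1 := by
      have h2' : ((⌈Real.logb R (w ξ)⌉ : ℝ)) - 1 ≤ (e ξ : ℝ) := by exact_mod_cast h2
      linarith
    calc w ξ = R ^ Real.logb R (w ξ) := (Real.rpow_logb hR0 hRne1 (hwpos ξ)).symm
      _ ≤ _ := Real.rpow_le_rpow_of_exponent_le hR1.le h1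
  have hlb : ∀ ξ, R ^ (e ξ : ℝ) ≤ w ξ := by
    intro ξ
    rcases Nat.eq_zero_or_pos (e ξ) with h | h
    · rw [h]
      simpa using hw ξ
    · have h3 : (0:ℤ) < ⌈Real.logb R (w ξ)⌉ - 1 := by
        by_contra h3
        push_neg at h3
        have h4 : e ξ = 0 := by
          simp only [hedef]
          exact Int.toNat_of_nonpos h3
        omega
      have h2 : ((e ξ : ℤ)) = ⌈Real.logb R (w ξ)⌉ - 1 := by
        simp only [hedef]
        exact Int.toNat_of_nonneg h3.le
      have h5 : (e ξ : ℝ) ≤ Real.logb R (w ξ) := by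
        have h6 := Int.ceil_lt_add_one (Real.logb R (w ξ))
        have h7 : ((e ξ : ℝ)) = ((⌈Real.logb R (w ξ)⌉ : ℝ)) - 1 := by exact_mod_cast h2
        linarith
      calc R ^ (e ξ : ℝ) ≤ R ^ Real.logb R (w ξ) :=
            Real.rpow_le_rpow_of_exponent_le hR1.le h5
        _ = w ξ := Real.rpow_logb hR0 hRne1 (hwpos ξ)
  have hfib : ∀ (k : ℕ) ξ, R ^ (k:ℝ) < w ξ → w ξ ≤ R ^ ((k:ℝ) + 1) → e ξ = k := by
    intro k ξ hk1 hk2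
    have hl1 : (k:ℝ) < Real.logb R (w ξ) := (Real.lt_logb_iff_rpow_lt hR1 (hwpos ξ)).mpr hk1
    have hl2 : Real.logb R (w ξ) ≤ (k:ℝ) + 1 := by
      rw [Real.logb_le_iff_le_rpow hR1 (hwpos ξ)]
      exact hk2
    have hceil : ⌈Real.logb R (w ξ)⌉ = (k:ℤ) + 1 := by
      rw [Int.ceil_eq_iff]
      constructor
      · push_cast; linarith
      · push_cast; linarith
    simp [hedef, hceil]
  -- counting
  have hone_le : ∀ k : ℕ, (1:ℝ) ≤ R ^ (k:ℝ) :=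
    fun k => Real.one_le_rpow hR1.le (Nat.cast_nonneg k)
  have hAfin : ∀ k : ℕ, {ξ | w ξ ≤ R ^ (k:ℝ)}.Finite := fun k => hfin _ (hone_le k)
  have hcount : ∀ k : ℕ, c₁ * R ^ ((k:ℝ) * Q) ≤ (({ξ | w ξ ≤ R ^ (k:ℝ)}.ncard : ℝ)) ∧
      (({ξ | w ξ ≤ R ^ (k:ℝ)}.ncard : ℝ)) ≤ c₂ * R ^ ((k:ℝ) * Q) := by
    intro k
    have h := hN (R ^ (k:ℝ)) (hone_le k)
    rw [← Real.rpow_mul hR0.le (k:ℝ) Q] at h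
    have hcc : (Nat.card {ξ // w ξ ≤ R ^ (k:ℝ)}) = {ξ | w ξ ≤ R ^ (k:ℝ)}.ncard :=
      Nat.card_coe_set_eq _
    rw [← hcc]
    exact h
  -- fiber finiteness
  have hFfin : ∀ k : ℕ, {ξ | e ξ = k}.Finite := by
    intro k
    apply (hfin (R ^ ((k:ℝ) + 1)) (Real.one_le_rpow hR1.le (by positivity))).subset
    intro ξ hξ
    have := hub ξ
    rw [Set.mem_setOf_eq] at hξ
    rw [hξ] at this
    exact this
  refine ⟨c₂ * R ^ (-(2*Q)) / (Q * Real.log R), c₂ * R ^ Q / (1 - a), ?_, ?_, ?_⟩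
  · have : (0:ℝ) < R ^ (-(2*Q)) := Real.rpow_pos_of_pos hR0 _
    positivity
  · have h1a : (0:ℝ) < 1 - a := by linarith
    positivity
  intro p hp1 hp2
  have hs0 : (0:ℝ) < p - 1 := by linarith
  have hs1 : p - 1 ≤ 1 := by linarith
  have hQp : -Q * p < 0 := by nlinarith
  set s : ℝ := p - 1 with hsdef
  set f : ι → ℝ≥0∞ := fun ξ => ENNReal.ofReal (w ξ ^ (-Q * p)) with hfdef
  have has0 : (0:ℝ) < a ^ s := Real.rpow_pos_of_pos ha0 _
  have has1 : a ^ s < 1 := Real.rpow_lt_one ha0.le ha1 hs0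
  set r : ℝ≥0∞ := ENNReal.ofReal (a ^ s) with hrdef
  have has : a ^ s = R ^ (-Q * s) := (Real.rpow_mul hR0.le (-Q) s).symm ▸ rfl
  have hask : ∀ k : ℕ, (a ^ s) ^ k = R ^ ((-Q * s) * (k:ℝ)) := by
    intro k
    rw [has, ← Real.rpow_natCast (R ^ (-Q * s)) k, ← Real.rpow_mul hR0.le]
  -- decomposition
  have hdecomp : ∑' ξ, f ξ = ∑' k : ℕ, ∑' x : {ξ // e ξ = k}, f x.1 := by
    rw [← (Equiv.sigmaFiberEquiv e).tsum_eq f, ENNReal.tsum_sigma']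
    rfl
  -- upper bound per fiber
  have hupper : ∀ k : ℕ, ∑' x : {ξ // e ξ = k}, f x.1 ≤ ENNReal.ofReal (c₂ * R ^ Q) * r ^ k := by
    intro k
    haveI instF : Fintype {ξ // e ξ = k} := (hFfin k).fintype
    have hnc : {ξ | e ξ = k}.ncard = Fintype.card {ξ // e ξ = k} := by
      rw [← Nat.card_coe_set_eq]
      exact @Nat.card_eq_fintype_card _ instF
    rw [tsum_fintype]
    have hterm : ∀ x : {ξ // e ξ = k}, f x.1 ≤ ENNReal.ofReal (R ^ ((k:ℝ) * (-Q * p))) := by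
      rintro ⟨ξ, hξ⟩
      apply ENNReal.ofReal_le_ofReal
      rw [Real.rpow_mul hR0.le]
      refine Real.rpow_le_rpow_of_nonpos (Real.rpow_pos_of_pos hR0 _) ?_ hQp.le
      have h9 := hlb ξ
      rw [hξ] at h9
      exact h9
    have hsub : {ξ | e ξ = k} ⊆ {ξ | w ξ ≤ R ^ (((k+1:ℕ)):ℝ)} := by
      intro ξ hξ
      have h1 := hub ξ
      rw [Set.mem_setOf_eq] at hξ ⊢
      rw [hξ] at h1
      convert h1 using 2
      push_cast
      ring
    have hc2 : (({ξ | e ξ = k}.ncard : ℝ)) ≤ c₂ * R ^ ((((k+1):ℕ):ℝ) * Q) :=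
      le_trans (Nat.cast_le.mpr (Set.ncard_le_ncard hsub (hAfin (k+1)))) (hcount (k+1)).2
    have halg : c₂ * R ^ ((((k+1):ℕ):ℝ) * Q) * R ^ ((k:ℝ) * (-Q * p)) = c₂ * R ^ Q * (a ^ s) ^ k := by
      rw [hask k, mul_assoc, mul_assoc, ← Real.rpow_add hR0, ← Real.rpow_add hR0]
      congr 1
      rw [hsdef]
      push_cast
      ring_nf
    have hcard : (({ξ | e ξ = k}.ncard : ℝ)) * R ^ ((k:ℝ) * (-Q * p)) ≤ c₂ * R ^ Q * (a ^ s) ^ k := by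
      rw [← halg]
      exact mul_le_mul_of_nonneg_right hc2 (Real.rpow_pos_of_pos hR0 _).le
    calc ∑ x : {ξ // e ξ = k}, f x.1
        ≤ ∑ _x : {ξ // e ξ = k}, ENNReal.ofReal (R ^ ((k:ℝ) * (-Q * p))) :=
          Finset.sum_le_sum fun x _ => hterm x
      _ = (Fintype.card {ξ // e ξ = k} : ℝ≥0∞) * ENNReal.ofReal (R ^ ((k:ℝ) * (-Q * p))) := by
          rw [Finset.sum_const, Finset.card_univ, nsmul_eq_mul]
      _ = ENNReal.ofReal ((({ξ | e ξ = k}.ncard : ℝ)) * R ^ ((k:ℝ) * (-Q * p))) := by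
          rw [ENNReal.ofReal_mul (Nat.cast_nonneg _), ENNReal.ofReal_natCast, hnc]
      _ ≤ ENNReal.ofReal (c₂ * R ^ Q * (a ^ s) ^ k) := ENNReal.ofReal_le_ofReal hcard
      _ = ENNReal.ofReal (c₂ * R ^ Q) * r ^ k := by
          rw [ENNReal.ofReal_mul (mul_nonneg hc₂.le hRQpos.le), hrdef,
            ← ENNReal.ofReal_pow has0.le]
  -- lower bound per fiber
  have hlower : ∀ k : ℕ, ENNReal.ofReal (c₂ * R ^ (-(2*Q))) * r ^ k ≤ ∑' x : {ξ // e ξ = k}, f x.1 := by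
    intro k
    haveI instF : Fintype {ξ // e ξ = k} := (hFfin k).fintype
    have hnc : {ξ | e ξ = k}.ncard = Fintype.card {ξ // e ξ = k} := by
      rw [← Nat.card_coe_set_eq]
      exact @Nat.card_eq_fintype_card _ instF
    rw [tsum_fintype]
    have hterm : ∀ x : {ξ // e ξ = k}, ENNReal.ofReal (R ^ (((k:ℝ)+1) * (-Q * p))) ≤ f x.1 := by
      rintro ⟨ξ, hξ⟩
      apply ENNReal.ofReal_le_ofReal
      rw [Real.rpow_mul hR0.le]
      refine Real.rpow_le_rpow_of_nonpos (hwpos ξ) ?_ hQp.le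
      have h9 := hub ξ
      rw [hξ] at h9
      exact h9
    set B : Set ι := {ξ | R ^ (k:ℝ) < w ξ ∧ w ξ ≤ R ^ ((k:ℝ)+1)} with hBdef
    have hBsub : B ⊆ {ξ | e ξ = k} := fun ξ hξ => hfib k ξ hξ.1 hξ.2
    have hBfin : B.Finite := (hFfin k).subset hBsub
    have hA1 : {ξ | w ξ ≤ R ^ (((k+1):ℕ):ℝ)} ⊆ {ξ | w ξ ≤ R ^ ((k:ℕ):ℝ)} ∪ B := by
      intro ξ hξ
      rw [Set.mem_setOf_eq] at hξ
      by_cases hc : w ξ ≤ R ^ ((k:ℕ):ℝ)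
      · exact Or.inl hc
      · push_neg at hc
        refine Or.inr ⟨hc, ?_⟩
        convert hξ using 2
        push_cast
        ring
    have hcard1 : {ξ | w ξ ≤ R ^ (((k+1):ℕ):ℝ)}.ncard ≤ {ξ | w ξ ≤ R ^ ((k:ℕ):ℝ)}.ncard + B.ncard :=
      le_trans (Set.ncard_le_ncard hA1 ((hAfin k).union hBfin)) (Set.ncard_union_le _ _)
    have hBreal : c₂ * R ^ ((k:ℝ) * Q) ≤ (B.ncard : ℝ) := by
      have h1 := (hcount (k+1)).1
      have h2 := (hcount k).2
      have h3 : ((({ξ | w ξ ≤ R ^ (((k+1):ℕ):ℝ)}.ncard) : ℝ)) ≤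
          ({ξ | w ξ ≤ R ^ ((k:ℕ):ℝ)}.ncard : ℝ) + (B.ncard : ℝ) := by exact_mod_cast hcard1
      have h4 : R ^ ((((k+1):ℕ):ℝ) * Q) = R ^ Q * R ^ ((k:ℝ) * Q) := by
        rw [← Real.rpow_add hR0]
        congr 1
        push_cast
        ring
      rw [h4] at h1
      have h5 : (0:ℝ) < R ^ ((k:ℝ) * Q) := Real.rpow_pos_of_pos hR0 _
      nlinarith [mul_nonneg (by linarith : (0:ℝ) ≤ c₁ * R ^ Q - 2 * c₂) h5.le]
    have hBF : (B.ncard : ℝ) ≤ (({ξ | e ξ = k}.ncard : ℝ)) :=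
      Nat.cast_le.mpr (Set.ncard_le_ncard hBsub (hFfin k))
    have hreal : c₂ * R ^ (-(2*Q)) * (a ^ s) ^ k ≤
        (({ξ | e ξ = k}.ncard : ℝ)) * R ^ (((k:ℝ)+1) * (-Q * p)) := by
      have hterm_pos : (0:ℝ) < R ^ (((k:ℝ)+1) * (-Q * p)) := Real.rpow_pos_of_pos hR0 _
      have step1 : c₂ * R ^ ((k:ℝ) * Q) * R ^ (((k:ℝ)+1) * (-Q * p)) ≤
          (({ξ | e ξ = k}.ncard : ℝ)) * R ^ (((k:ℝ)+1) * (-Q * p)) :=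
        mul_le_mul_of_nonneg_right (le_trans hBreal hBF) hterm_pos.le
      refine le_trans ?_ step1
      have e1 : c₂ * R ^ (-(2*Q)) * R ^ ((-Q*s)*(k:ℝ)) = c₂ * R ^ (-(2*Q) + (-Q*s)*(k:ℝ)) := by
        rw [mul_assoc, ← Real.rpow_add hR0]
      have e2 : c₂ * R ^ ((k:ℝ)*Q) * R ^ (((k:ℝ)+1)*(-Q*p)) =
          c₂ * R ^ ((k:ℝ)*Q + ((k:ℝ)+1)*(-Q*p)) := by
        rw [mul_assoc, ← Real.rpow_add hR0]
      rw [hask k, e1, e2]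
      refine mul_le_mul_of_nonneg_left ?_ hc₂.le
      apply Real.rpow_le_rpow_of_exponent_le hR1.le
      rw [hsdef]
      nlinarith [mul_nonneg hQ.le (by linarith : (0:ℝ) ≤ 2 - p)]
    calc ENNReal.ofReal (c₂ * R ^ (-(2*Q))) * r ^ k
        = ENNReal.ofReal (c₂ * R ^ (-(2*Q)) * (a ^ s) ^ k) := by
          rw [ENNReal.ofReal_mul (mul_nonneg hc₂.le (Real.rpow_pos_of_pos hR0 _).le), hrdef,
            ← ENNReal.ofReal_pow has0.le]
      _ ≤ ENNReal.ofReal ((({ξ | e ξ = k}.ncard : ℝ)) * R ^ (((k:ℝ)+1) * (-Q * p))) :=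
          ENNReal.ofReal_le_ofReal hreal
      _ = (Fintype.card {ξ // e ξ = k} : ℝ≥0∞) * ENNReal.ofReal (R ^ (((k:ℝ)+1) * (-Q * p))) := by
          rw [ENNReal.ofReal_mul (Nat.cast_nonneg _), ENNReal.ofReal_natCast, hnc]
      _ ≤ ∑ x : {ξ // e ξ = k}, f x.1 := by
          rw [← Finset.card_univ, ← nsmul_eq_mul]
          exact Finset.card_nsmul_le_sum _ _ _ (fun x _ => hterm x)
  -- geometric series
  have hgeo : ∑' k : ℕ, r ^ k = ENNReal.ofReal ((1 - a ^ s)⁻¹) := by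
    rw [ENNReal.tsum_geometric, ENNReal.ofReal_inv_of_pos (by linarith),
      ENNReal.ofReal_sub 1 has0.le, ENNReal.ofReal_one]
  have hS_ub : ∑' ξ, f ξ ≤ ENNReal.ofReal (c₂ * R ^ Q * (1 - a ^ s)⁻¹) := by
    rw [hdecomp, ENNReal.ofReal_mul (by positivity)]
    calc ∑' k : ℕ, ∑' x : {ξ // e ξ = k}, f x.1
        ≤ ∑' k : ℕ, ENNReal.ofReal (c₂ * R ^ Q) * r ^ k := ENNReal.tsum_le_tsum hupper
      _ = ENNReal.ofReal (c₂ * R ^ Q) * ∑' k : ℕ, r ^ k := ENNReal.tsum_mul_left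
      _ = _ := by rw [hgeo]
  have hS_lb : ENNReal.ofReal (c₂ * R ^ (-(2*Q)) * (1 - a ^ s)⁻¹) ≤ ∑' ξ, f ξ := by
    rw [hdecomp, ENNReal.ofReal_mul (by positivity)]
    calc ENNReal.ofReal (c₂ * R ^ (-(2*Q))) * ENNReal.ofReal ((1 - a ^ s)⁻¹)
        = ENNReal.ofReal (c₂ * R ^ (-(2*Q))) * ∑' k : ℕ, r ^ k := by rw [hgeo]
      _ = ∑' k : ℕ, ENNReal.ofReal (c₂ * R ^ (-(2*Q))) * r ^ k := ENNReal.tsum_mul_left.symm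
      _ ≤ _ := ENNReal.tsum_le_tsum hlower
  have hSne : ∑' ξ, f ξ ≠ ⊤ := (lt_of_le_of_lt hS_ub ENNReal.ofReal_lt_top).ne
  have htr : ∑' ξ, (w ξ) ^ (-Q * p) = (∑' ξ, f ξ).toReal := by
    rw [ENNReal.tsum_toReal_eq (fun ξ => ENNReal.ofReal_ne_top)]
    exact tsum_congr fun ξ => (ENNReal.toReal_ofReal (Real.rpow_nonneg (hwpos ξ).le _)).symm
  have hub' : ∑' ξ, (w ξ) ^ (-Q * p) ≤ c₂ * R ^ Q * (1 - a ^ s)⁻¹ := by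
    rw [htr]
    have h1as : (0:ℝ) < 1 - a ^ s := by linarith
    exact ENNReal.toReal_le_of_le_ofReal (by positivity) hS_ub
  have hlb' : c₂ * R ^ (-(2*Q)) * (1 - a ^ s)⁻¹ ≤ ∑' ξ, (w ξ) ^ (-Q * p) := by
    rw [htr]
    exact (ENNReal.ofReal_le_iff_le_toReal hSne).mp hS_lb
  clear hupper hlower hdecomp hgeo hS_ub hS_lb hSne htr hfdef f hrdef r
  constructor
  · have h3 : (0:ℝ) < 1 - a ^ s := by linarith
    have hexp : 1 - a ^ s ≤ s * (Q * Real.log R) := by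
      have h1 : a ^ s = Real.exp (-Q * Real.log R * s) := by
        rw [Real.rpow_def_of_pos ha0, hadef, Real.log_rpow hR0]
      have h2 := Real.add_one_le_exp (-Q * Real.log R * s)
      rw [← h1] at h2
      nlinarith
    have hkey : (Q * Real.log R)⁻¹ ≤ s / (1 - a ^ s) := by
      rw [le_div_iff₀ h3, inv_mul_le_iff₀ (by positivity)]
      nlinarith
    calc c₂ * R ^ (-(2*Q)) / (Q * Real.log R)
        = c₂ * R ^ (-(2*Q)) * (Q * Real.log R)⁻¹ := by rw [div_eq_mul_inv]
      _ ≤ c₂ * R ^ (-(2*Q)) * (s / (1 - a ^ s)) := by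
          refine mul_le_mul_of_nonneg_left hkey ?_
          exact mul_nonneg hc₂.le (Real.rpow_pos_of_pos hR0 _).le
      _ = s * (c₂ * R ^ (-(2*Q)) * (1 - a ^ s)⁻¹) := by ring
      _ ≤ s * ∑' ξ, (w ξ) ^ (-Q * p) := mul_le_mul_of_nonneg_left hlb' hs0.le
  · have h3 : (0:ℝ) < 1 - a ^ s := by linarith
    have h1a : (0:ℝ) < 1 - a := by linarith
    have hamgm : a ^ s * 1 ^ (1 - s) ≤ s * a + (1 - s) * 1 :=
      Real.geom_mean_le_arith_mean2_weighted hs0.le (by linarith) ha0.le zero_le_one (by ring)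
    rw [Real.one_rpow, mul_one, mul_one] at hamgm
    have hchord : s * (1 - a) ≤ 1 - a ^ s := by nlinarith
    have hkey : s / (1 - a ^ s) ≤ (1 - a)⁻¹ := by
      rw [inv_eq_one_div, div_le_div_iff₀ h3 h1a]
      nlinarith
    calc s * ∑' ξ, (w ξ) ^ (-Q * p)
        ≤ s * (c₂ * R ^ Q * (1 - a ^ s)⁻¹) := mul_le_mul_of_nonneg_left hub' hs0.le
      _ = c₂ * R ^ Q * (s / (1 - a ^ s)) := by ring
      _ ≤ c₂ * R ^ Q * (1 - a)⁻¹ := by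
          refine mul_le_mul_of_nonneg_left hkey ?_
          exact mul_nonneg hc₂.le hRQpos.le
      _ = c₂ * R ^ Q / (1 - a) := by rw [div_eq_mul_inv]
end

section
/- Let ι be an index type, w : ι → ℝ with w ξ ≥ 1 for all ξ, satisfying the upper Weyl law with exponent Q > 0 (finite level sets, N(λ) ≤ c₂·λ^Q for λ ≥ 1). Let m < −Q. Then the function p ↦ (p − 1) · ∑'_ξ (w ξ)^{m·p} tends to 0 as p tends to 1 from the right (limit along the filter 𝓝[>] 1). (Via the Tauberian formula Tr_ω(A) = lim_{p→1⁺}(p−1)Tr(A^p), this is the paper's claim that the Dixmier trace of a positive multiplier of order m < −Q vanishes.) -/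
theorem dixmier_trace_vanishes_below_critical_order
    {ι : Type*} (w : ι → ℝ) (hw : ∀ ξ, 1 ≤ w ξ)
    (hfin : ∀ lam : ℝ, 1 ≤ lam → {ξ | w ξ ≤ lam}.Finite)
    (Q : ℝ) (hQ : 0 < Q) (c₂ : ℝ) (hc₂ : 0 < c₂)
    (hN : ∀ lam : ℝ, 1 ≤ lam → (Nat.card {ξ // w ξ ≤ lam} : ℝ) ≤ c₂ * lam ^ Q)
    (m : ℝ) (hm : m < -Q) :
    Filter.Tendsto (fun p : ℝ => (p - 1) * (∑' ξ, (w ξ) ^ (m * p)))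
      (nhdsWithin 1 (Set.Ioi 1)) (nhds 0) := by
  have hm0 : m < 0 := lt_of_lt_of_le hm (by linarith)
  set r : ℝ := (2:ℝ) ^ (Q + m) with hr_def
  have hr0 : 0 < r := Real.rpow_pos_of_pos two_pos _
  have hr1 : r < 1 := Real.rpow_lt_one_of_one_lt_of_neg one_lt_two (by linarith)
  set C : ℝ := c₂ * (2:ℝ) ^ Q * (1 - r)⁻¹ with hC_def
  have hC0 : 0 ≤ C := by
    apply mul_nonneg (mul_nonneg hc₂.le (Real.rpow_nonneg (by norm_num) _))
    exact inv_nonneg.mpr (by linarith)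
  -- the key finite-sum bound, uniform in the exponent e ≤ m
  have hbound : ∀ e : ℝ, e ≤ m → ∀ s : Finset ι, ∑ ξ ∈ s, w ξ ^ e ≤ C := by
    intro e he s
    have step1 : ∀ ξ ∈ s, w ξ ^ e ≤ w ξ ^ m := fun ξ _ =>
      Real.rpow_le_rpow_of_exponent_le (hw ξ) he
    refine le_trans (Finset.sum_le_sum step1) ?_
    set g : ι → ℕ := fun ξ => Nat.log 2 ⌊w ξ⌋₊ with hg
    set M := s.sup g + 1 with hM
    have hmap : ∀ ξ ∈ s, g ξ ∈ Finset.range M := fun ξ hξ =>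
      Finset.mem_range.mpr (Nat.lt_succ_of_le (Finset.le_sup hξ))
    rw [← Finset.sum_fiberwise_of_maps_to hmap]
    have shell : ∀ n : ℕ, (∑ ξ ∈ s.filter (fun ξ => g ξ = n), w ξ ^ m)
        ≤ c₂ * (2:ℝ) ^ Q * r ^ n := by
      intro n
      have hfloor1 : ∀ ξ, 1 ≤ ⌊w ξ⌋₊ := fun ξ => Nat.le_floor (by exact_mod_cast hw ξ)
      have hlow : ∀ ξ ∈ s.filter (fun ξ => g ξ = n), ((2:ℝ) ^ n) ≤ w ξ := by
        intro ξ hξ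
        obtain ⟨hξs, hgξ⟩ := Finset.mem_filter.mp hξ
        have h1 : (2:ℕ) ^ n ≤ ⌊w ξ⌋₊ := by
          rw [← hgξ]; exact Nat.pow_log_le_self 2 (by have := hfloor1 ξ; omega)
        calc ((2:ℝ) ^ n) = ((2^n : ℕ) : ℝ) := by push_cast; ring
          _ ≤ (⌊w ξ⌋₊ : ℝ) := by exact_mod_cast h1
          _ ≤ w ξ := Nat.floor_le (by linarith [hw ξ])
      have hhigh : ∀ ξ ∈ s.filter (fun ξ => g ξ = n), w ξ ≤ (2:ℝ) ^ (n+1) := by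
        intro ξ hξ
        obtain ⟨hξs, hgξ⟩ := Finset.mem_filter.mp hξ
        have h1 : ⌊w ξ⌋₊ < 2 ^ (n+1) := by
          rw [← hgξ]; exact Nat.lt_pow_succ_log_self one_lt_two _
        have h2 : (⌊w ξ⌋₊ : ℝ) + 1 ≤ ((2:ℝ) ^ (n+1)) := by
          have : (⌊w ξ⌋₊ : ℕ) + 1 ≤ 2 ^ (n+1) := h1
          calc (⌊w ξ⌋₊ : ℝ) + 1 = ((⌊w ξ⌋₊ + 1 : ℕ) : ℝ) := by push_cast; ring
            _ ≤ ((2^(n+1) : ℕ) : ℝ) := by exact_mod_cast this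
            _ = (2:ℝ)^(n+1) := by push_cast; ring
        linarith [Nat.lt_floor_add_one (w ξ)]
      have hfbound : ∀ ξ ∈ s.filter (fun ξ => g ξ = n), w ξ ^ m ≤ ((2:ℝ) ^ n) ^ m := by
        intro ξ hξ
        exact Real.rpow_le_rpow_of_nonpos (by positivity) (hlow ξ hξ) hm0.le
      have hcard : ((s.filter (fun ξ => g ξ = n)).card : ℝ) ≤ c₂ * ((2:ℝ)^(n+1)) ^ Q := by
        have hlam : (1:ℝ) ≤ (2:ℝ)^(n+1) := one_le_pow₀ one_le_two
        have hsub : (↑(s.filter (fun ξ => g ξ = n)) : Set ι) ⊆ {ξ | w ξ ≤ (2:ℝ)^(n+1)} := by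
          intro ξ hξ; exact hhigh ξ hξ
        have h1 : (s.filter (fun ξ => g ξ = n)).card ≤ Nat.card {ξ // w ξ ≤ (2:ℝ)^(n+1)} :=
          calc (s.filter (fun ξ => g ξ = n)).card
              = (↑(s.filter (fun ξ => g ξ = n)) : Set ι).ncard :=
                (Set.ncard_coe_finset _).symm
            _ ≤ ({ξ | w ξ ≤ (2:ℝ)^(n+1)}).ncard := Set.ncard_le_ncard hsub (hfin _ hlam)
            _ = Nat.card {ξ // w ξ ≤ (2:ℝ)^(n+1)} := (Nat.card_coe_set_eq _).symm
        calc ((s.filter (fun ξ => g ξ = n)).card : ℝ)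
            ≤ (Nat.card {ξ // w ξ ≤ (2:ℝ)^(n+1)} : ℝ) := by exact_mod_cast h1
          _ ≤ c₂ * ((2:ℝ)^(n+1)) ^ Q := hN _ hlam
      calc (∑ ξ ∈ s.filter (fun ξ => g ξ = n), w ξ ^ m)
          ≤ ((s.filter (fun ξ => g ξ = n)).card : ℝ) * ((2:ℝ) ^ n) ^ m := by
            simpa using Finset.sum_le_card_nsmul _ _ _ hfbound
        _ ≤ (c₂ * ((2:ℝ)^(n+1)) ^ Q) * ((2:ℝ) ^ n) ^ m := by
            apply mul_le_mul_of_nonneg_right hcard (Real.rpow_nonneg (by positivity) _)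
        _ = c₂ * (2:ℝ) ^ Q * r ^ n := by
            rw [hr_def, ← Real.rpow_natCast (2:ℝ) (n+1), ← Real.rpow_natCast (2:ℝ) n,
              ← Real.rpow_mul (by norm_num), ← Real.rpow_mul (by norm_num),
              ← Real.rpow_natCast ((2:ℝ) ^ (Q + m)) n, ← Real.rpow_mul (by norm_num),
              mul_assoc c₂, ← Real.rpow_add two_pos, mul_assoc c₂, ← Real.rpow_add two_pos]
            congr 1
            push_cast
            ring_nf
    calc (∑ n ∈ Finset.range M, ∑ ξ ∈ s.filter (fun ξ => g ξ = n), w ξ ^ m)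
        ≤ ∑ n ∈ Finset.range M, c₂ * (2:ℝ) ^ Q * r ^ n :=
          Finset.sum_le_sum (fun n _ => shell n)
      _ = c₂ * (2:ℝ) ^ Q * ∑ n ∈ Finset.range M, r ^ n := by rw [Finset.mul_sum]
      _ ≤ C := by
          rw [hC_def]
          apply mul_le_mul_of_nonneg_left _ (mul_nonneg hc₂.le (Real.rpow_nonneg (by norm_num) _))
          calc (∑ n ∈ Finset.range M, r ^ n) ≤ ∑' n : ℕ, r ^ n :=
              Summable.sum_le_tsum _ (fun i _ => pow_nonneg hr0.le i)
                (summable_geometric_of_lt_one hr0.le hr1)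
            _ = (1 - r)⁻¹ := tsum_geometric_of_lt_one hr0.le hr1
  -- summability and tsum bound for each p ≥ 1
  have htsum : ∀ p : ℝ, 1 ≤ p → (∑' ξ, w ξ ^ (m * p)) ≤ C := by
    intro p hp
    have hmp : m * p ≤ m := by nlinarith
    exact tsum_le_of_sum_le' hC0 (hbound (m * p) hmp)
  have htsum0 : ∀ p : ℝ, 0 ≤ (∑' ξ, w ξ ^ (m * p)) := fun p =>
    tsum_nonneg (fun ξ => Real.rpow_nonneg (by linarith [hw ξ]) _)
  have hlim : Filter.Tendsto (fun p : ℝ => (p - 1) * C) (nhdsWithin 1 (Set.Ioi 1)) (nhds 0) := by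
    have : Filter.Tendsto (fun p : ℝ => (p - 1) * C) (nhds 1) (nhds ((1 - 1) * C)) :=
      ((continuous_id.sub continuous_const).mul continuous_const).tendsto 1
    simpa using this.mono_left nhdsWithin_le_nhds
  apply squeeze_zero' ?_ ?_ hlim
  · filter_upwards [self_mem_nhdsWithin] with p hp
    exact mul_nonneg (by simp at hp; linarith) (htsum0 p)
  · filter_upwards [self_mem_nhdsWithin] with p hp
    simp only [Set.mem_Ioi] at hp
    exact mul_le_mul_of_nonneg_left (htsum p hp.le) (by linarith)
end
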